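/- Let s and τ be holomorphic on an open neighborhood of the closure of U_R with |s(y)| ≤ C/|y| and |τ(y)| ≤ C/|y|² on U_R, for R sufficiently large. Then the first-order linear ODE σ'(y) − (1 + s(y))σ(y) = τ(y) admits a holomorphic solution σ on U_R satisfying |σ(y)| ≤ C'/|y| for some constant C'. -/

import Mathlib

open Real

/-- `U_R = {ζ : |ζ| > R, |Arg(ζ) − π| < π/8}`. -/
def Usector (R : ℝ) : Set ℂ :=
  {ζ : ℂ | R < ‖ζ‖ ∧ |Complex.arg (-ζ)| < π / 8}

open Set intervalIntegral


noncomputable section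

/-- The strip/half-plane domain. -/
def Om (a b : ℝ) : Set ℂ := {w : ℂ | a < w.re ∧ |w.im| < b}

lemma isOpen_Om (a b : ℝ) : IsOpen (Om a b) := by
  have h1 : IsOpen {w : ℂ | a < w.re} := isOpen_lt continuous_const Complex.continuous_re
  have h2 : IsOpen {w : ℂ | |w.im| < b} := isOpen_lt (Complex.continuous_im.abs) continuous_const
  exact h1.inter h2

lemma mem_Om {a b : ℝ} {w : ℂ} : w ∈ Om a b ↔ a < w.re ∧ |w.im| < b := Iff.rfl

lemma abs_lt_of_uIcc {b y₁ y₂ t : ℝ} (hy1 : |y₁| < b) (hy2 : |y₂| < b)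
    (ht : t ∈ uIcc y₁ y₂) : |t| < b := by
  rw [Set.uIcc, Set.mem_Icc] at ht
  have h := abs_le_max_abs_abs ht.1 ht.2
  have h1 : |y₁ ⊓ y₂| < b := by rcases min_cases y₁ y₂ with ⟨h1, _⟩ | ⟨h1, _⟩ <;> rw [h1] <;> assumption
  have h2 : |y₁ ⊔ y₂| < b := by rcases max_cases y₁ y₂ with ⟨h2, _⟩ | ⟨h2, _⟩ <;> rw [h2] <;> assumption
  exact lt_of_le_of_lt h (max_lt h1 h2)

lemma horiz_mem_Om {a b x₁ x₂ y t : ℝ} (h1 : a < x₁) (h2 : a < x₂) (hy : |y| < b)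
    (ht : t ∈ uIcc x₁ x₂) : (t : ℂ) + y * Complex.I ∈ Om a b := by
  rw [Set.uIcc, Set.mem_Icc] at ht
  refine ⟨?_, ?_⟩
  · have : a < min x₁ x₂ := lt_min h1 h2
    simp only [Complex.add_re, Complex.ofReal_re, Complex.mul_re, Complex.I_re, Complex.I_im,
      Complex.ofReal_im, mul_zero, mul_one, zero_sub, zero_mul, sub_zero, neg_zero, add_zero]
    exact lt_of_lt_of_le this ht.1
  · simpa using hy

lemma vert_mem_Om {a b x y₁ y₂ t : ℝ} (h1 : a < x) (hy1 : |y₁| < b) (hy2 : |y₂| < b)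
    (ht : t ∈ uIcc y₁ y₂) : (x : ℂ) + t * Complex.I ∈ Om a b := by
  refine ⟨by simpa using h1, ?_⟩
  have := abs_lt_of_uIcc hy1 hy2 ht
  simpa using this

lemma rect_subset_Om {a b x₁ x₂ y₁ y₂ : ℝ} (h1 : a < x₁) (h2 : a < x₂) (hy1 : |y₁| < b)
    (hy2 : |y₂| < b) : (Set.uIcc x₁ x₂ ×ℂ Set.uIcc y₁ y₂) ⊆ Om a b := by
  intro z hz
  rw [Complex.mem_reProdIm] at hz
  have h3 : (z.re : ℂ) + z.im * Complex.I ∈ Om a b := by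
    refine vert_mem_Om ?_ hy1 hy2 hz.2
    rw [Set.uIcc, Set.mem_Icc] at hz
    exact lt_of_lt_of_le (lt_min h1 h2) hz.1.1
  simpa [Complex.re_add_im] using h3

end

section FTC

open Complex

lemma hasDerivAt_comp_horiz {f : ℂ → ℂ} {d : ℂ} {y t : ℝ}
    (hf : HasDerivAt f d ((t : ℂ) + y * Complex.I)) :
    HasDerivAt (fun u : ℝ => f ((u : ℂ) + y * Complex.I)) d t := by
  have h1 : HasDerivAt (fun z : ℂ => f (z + (y : ℂ) * Complex.I)) d (t : ℂ) := by
    have h2 := hf.comp (t : ℂ) ((hasDerivAt_id ((t : ℂ))).add_const ((y : ℂ) * Complex.I))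
    rw [mul_one] at h2; exact h2
  exact h1.comp_ofReal

lemma hasDerivAt_comp_vert {f : ℂ → ℂ} {d : ℂ} {x t : ℝ}
    (hf : HasDerivAt f d ((x : ℂ) + t * Complex.I)) :
    HasDerivAt (fun u : ℝ => f ((x : ℂ) + (u : ℂ) * Complex.I)) (d * Complex.I) t := by
  have h1 : HasDerivAt (fun z : ℂ => f ((x : ℂ) + z * Complex.I)) (d * Complex.I) (t : ℂ) := by
    have h2 := hf.comp (t : ℂ) (((hasDerivAt_id ((t : ℂ))).mul_const Complex.I).const_add (x : ℂ))
    rw [one_mul] at h2; exact h2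
  exact h1.comp_ofReal

lemma ftc_horiz {f g : ℂ → ℂ} {x₁ x₂ y : ℝ}
    (hf : ∀ t ∈ uIcc x₁ x₂, HasDerivAt f (g ((t : ℂ) + y * Complex.I)) ((t : ℂ) + y * Complex.I))
    (hg : ContinuousOn (fun t : ℝ => g ((t : ℂ) + y * Complex.I)) (uIcc x₁ x₂)) :
    f ((x₂ : ℂ) + y * Complex.I) - f ((x₁ : ℂ) + y * Complex.I)
      = ∫ t in x₁..x₂, g ((t : ℂ) + y * Complex.I) :=
  (intervalIntegral.integral_eq_sub_of_hasDerivAt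
    (fun t ht => hasDerivAt_comp_horiz (hf t ht)) hg.intervalIntegrable).symm

lemma ftc_vert {f g : ℂ → ℂ} {x y₁ y₂ : ℝ}
    (hf : ∀ t ∈ uIcc y₁ y₂, HasDerivAt f (g ((x : ℂ) + t * Complex.I)) ((x : ℂ) + t * Complex.I))
    (hg : ContinuousOn (fun t : ℝ => g ((x : ℂ) + t * Complex.I)) (uIcc y₁ y₂)) :
    f ((x : ℂ) + y₂ * Complex.I) - f ((x : ℂ) + y₁ * Complex.I)
      = ∫ t in y₁..y₂, g ((x : ℂ) + t * Complex.I) * Complex.I :=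
  (intervalIntegral.integral_eq_sub_of_hasDerivAt
    (fun t ht => hasDerivAt_comp_vert (hf t ht))
    (by exact (hg.mul continuousOn_const).intervalIntegrable)).symm

lemma norm_ftc_horiz_le {f g : ℂ → ℂ} {x₁ x₂ y M : ℝ}
    (hf : ∀ t ∈ uIcc x₁ x₂, HasDerivAt f (g ((t : ℂ) + y * Complex.I)) ((t : ℂ) + y * Complex.I))
    (hg : ContinuousOn (fun t : ℝ => g ((t : ℂ) + y * Complex.I)) (uIcc x₁ x₂))
    (hM : ∀ t ∈ uIcc x₁ x₂, ‖g ((t : ℂ) + y * Complex.I)‖ ≤ M) :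
    ‖f ((x₂ : ℂ) + y * Complex.I) - f ((x₁ : ℂ) + y * Complex.I)‖ ≤ M * |x₂ - x₁| := by
  rw [ftc_horiz hf hg]
  exact intervalIntegral.norm_integral_le_of_norm_le_const
    (fun t ht => hM t (Set.uIoc_subset_uIcc ht))

lemma norm_ftc_vert_le {f g : ℂ → ℂ} {x y₁ y₂ M : ℝ}
    (hf : ∀ t ∈ uIcc y₁ y₂, HasDerivAt f (g ((x : ℂ) + t * Complex.I)) ((x : ℂ) + t * Complex.I))
    (hg : ContinuousOn (fun t : ℝ => g ((x : ℂ) + t * Complex.I)) (uIcc y₁ y₂))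
    (hM : ∀ t ∈ uIcc y₁ y₂, ‖g ((x : ℂ) + t * Complex.I)‖ ≤ M) :
    ‖f ((x : ℂ) + y₂ * Complex.I) - f ((x : ℂ) + y₁ * Complex.I)‖ ≤ M * |y₂ - y₁| := by
  rw [ftc_vert hf hg]
  refine intervalIntegral.norm_integral_le_of_norm_le_const (fun t ht => ?_)
  rw [norm_mul, Complex.norm_I, mul_one]
  exact hM t (Set.uIoc_subset_uIcc ht)

end FTC


lemma exp_ge_aux : ∀ u v : ℝ, u ≤ v → Real.exp u * (v - u) ≤ Real.exp v - Real.exp u := by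
  intro u v huv
  have h1 := Real.add_one_le_exp (v - u)
  have h2 : Real.exp v = Real.exp u * Real.exp (v - u) := by
    rw [← Real.exp_add]; ring_nf
  nlinarith [Real.exp_pos u]

lemma keyH_aux (C R a x t cosY SW SP : ℝ) (hC : 0 < C) (hR : 2*C + 4 ≤ R)
    (hexpa : Real.exp a = R) (hta : a < t) (htx : t ≤ max (a+1) x) (hxa : a < x)
    (hcos1 : 1/2 ≤ cosY) (hcos2 : cosY ≤ 1)
    (hRe : SW - SP ≤ C * |x - t|) :
    (-(Real.exp x * cosY) + SW) - (-(Real.exp t * cosY) + SP) - t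
      ≤ (Real.exp (a+1) + C) + (t - 2*x) := by
  have het : R ≤ Real.exp t := by rw [← hexpa]; exact Real.exp_le_exp.2 hta.le
  have hex0 := Real.exp_pos x
  have het0 := Real.exp_pos t
  have hex₀0 := Real.exp_pos (a+1)
  rcases le_or_gt t x with hcase | hcase
  · have habs1 : |x - t| = x - t := abs_of_nonneg (by linarith)
    rw [habs1] at hRe
    have hge := exp_ge_aux t x hcase
    have hmul : (Real.exp t - Real.exp x) * cosY ≤ (Real.exp t - Real.exp x) * (1/2) := by
      apply mul_le_mul_of_nonpos_left hcos1
      linarith [Real.exp_le_exp.2 hcase]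
    nlinarith [mul_nonneg (sub_nonneg.2 het) (sub_nonneg.2 hcase)]
  · have htx₀' : t ≤ a + 1 := by
      rcases max_cases (a+1) x with ⟨hm, _⟩ | ⟨hm, hm2⟩
      · rwa [hm] at htx
      · rw [hm] at htx; linarith
    have habs1 : |x - t| = t - x := by rw [abs_of_nonpos (by linarith : x - t ≤ 0)]; ring
    rw [habs1] at hRe
    have hmul : (Real.exp t - Real.exp x) * cosY ≤ Real.exp t - Real.exp x := by
      apply mul_le_of_le_one_right _ hcos2
      have := Real.exp_le_exp.2 hcase.le
      linarith
    have het2 : Real.exp t ≤ Real.exp (a+1) := Real.exp_le_exp.2 htx₀'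
    have hCt : C * (t - x) ≤ C * 1 := by
      apply mul_le_mul_of_nonneg_left _ hC.le
      linarith
    nlinarith

lemma keyV_aux (C R a x cosY cosT SW SP : ℝ) (hC : 0 < C) (hR : 2*C + 4 ≤ R)
    (hexpa : Real.exp a = R) (hxa : a < x) (hcos1 : 1/2 ≤ cosY) (hcosT : cosT ≤ 1)
    (hRe : SW - SP ≤ C * ((x - a) + 1) + C * 1) :
    (-(Real.exp x * cosY) + SW) - (-(Real.exp (a+1) * cosT) + SP)
      ≤ Real.exp (a+1) + 2*C + (a+1) - x := by
  have hge := exp_ge_aux a x hxa.le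
  rw [hexpa] at hge
  have hex0 := Real.exp_pos x
  have hex₀0 := Real.exp_pos (a+1)
  have hmul : Real.exp (a+1) * cosT ≤ Real.exp (a+1) :=
    mul_le_of_le_one_right hex₀0.le hcosT
  have hmul2 : Real.exp x * (1/2) ≤ Real.exp x * cosY :=
    mul_le_mul_of_nonneg_left hcos1 hex0.le
  nlinarith [mul_nonneg (sub_nonneg.2 hxa.le) hC.le, mul_nonneg (sub_nonneg.2 hxa.le) (by linarith : (0:ℝ) ≤ R)]

lemma habs_aux (u v : ℝ) (huv : u ≤ v) :
    |Real.exp v - Real.exp (u+1)| ≤ Real.exp 1 * Real.exp v := by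
  have h1 : Real.exp (u+1) = Real.exp 1 * Real.exp u := by rw [Real.exp_add]; ring
  have h2 : Real.exp u ≤ Real.exp v := Real.exp_le_exp.2 huv
  have h3 : (1:ℝ) ≤ Real.exp 1 := by nlinarith [Real.add_one_le_exp (1:ℝ)]
  rw [abs_le]
  constructor <;> nlinarith [Real.exp_pos v, Real.exp_pos u]


section Primitive

lemma exists_primitive (a b : ℝ) (hb : 0 < b) (g : ℂ → ℂ)
    (hg : ∀ w ∈ Om a b, DifferentiableAt ℂ g w) :
    ∃ G : ℂ → ℂ, (∀ w ∈ Om a b, HasDerivAt G (g w) w) ∧ G (((a + 1 : ℝ) : ℂ)) = 0 := by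
  have hax₀ : a < a + 1 := by linarith
  have h0b : |(0:ℝ)| < b := by simpa using hb
  have gcont : ContinuousOn g (Om a b) := fun w hw => ((hg w hw).continuousAt).continuousWithinAt
  have hint_h : ∀ (x₁ x₂ y : ℝ), a < x₁ → a < x₂ → |y| < b →
      IntervalIntegrable (fun t : ℝ => g ((t:ℂ) + y*Complex.I)) MeasureTheory.volume x₁ x₂ := by
    intro x₁ x₂ y h1 h2 hy
    exact (gcont.comp (Continuous.continuousOn (by continuity))
      (fun t ht => horiz_mem_Om h1 h2 hy ht)).intervalIntegrable
  have hint_v : ∀ (x y₁ y₂ : ℝ), a < x → |y₁| < b → |y₂| < b →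
      IntervalIntegrable (fun t : ℝ => g ((x:ℂ) + t*Complex.I)) MeasureTheory.volume y₁ y₂ := by
    intro x y₁ y₂ h1 hy1 hy2
    exact (gcont.comp (Continuous.continuousOn (by continuity))
      (fun t ht => vert_mem_Om h1 hy1 hy2 ht)).intervalIntegrable
  set x₀ : ℝ := a + 1 with hx₀def
  set G : ℂ → ℂ := fun w =>
    (Complex.I • ∫ t in (0:ℝ)..w.im, g ((x₀:ℂ) + t*Complex.I))
      + ∫ t in x₀..w.re, g ((t:ℂ) + w.im*Complex.I) with hGdef
  have hzero : G ((x₀ : ℝ) : ℂ) = 0 := by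
    simp [hGdef, Complex.ofReal_re, Complex.ofReal_im, intervalIntegral.integral_same]
  have key : ∀ z ∈ Om a b, ∀ w ∈ Om a b,
      G w - G z = (∫ t in z.re..w.re, g ((t:ℂ) + z.im*Complex.I))
        + Complex.I • ∫ t in z.im..w.im, g ((w.re:ℂ) + t*Complex.I) := by
    intro z hz w hw
    obtain ⟨hz1, hz2⟩ := hz
    obtain ⟨hw1, hw2⟩ := hw
    have hdiff : DifferentiableOn ℂ g
        (Set.uIcc ((x₀:ℂ) + (z.im:ℂ)*Complex.I).re w.re ×ℂ
          Set.uIcc ((x₀:ℂ) + (z.im:ℂ)*Complex.I).im w.im) := by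
      have hsub : (Set.uIcc ((x₀:ℂ) + (z.im:ℂ)*Complex.I).re w.re ×ℂ
          Set.uIcc ((x₀:ℂ) + (z.im:ℂ)*Complex.I).im w.im) ⊆ Om a b := by
        simpa using rect_subset_Om (x₁ := x₀) (x₂ := w.re) (y₁ := z.im) (y₂ := w.im)
          hax₀ hw1 hz2 hw2
      exact fun u hu => (hg u (hsub hu)).differentiableWithinAt
    have rect := Complex.integral_boundary_rect_eq_zero_of_differentiableOn g
      ((x₀:ℂ) + (z.im:ℂ)*Complex.I) w hdiff
    simp only [Complex.add_re, Complex.ofReal_re, Complex.mul_re, Complex.I_re, Complex.I_im,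
      Complex.ofReal_im, mul_zero, mul_one, zero_sub, zero_mul, sub_zero, neg_zero, add_zero,
      Complex.add_im, Complex.mul_im, zero_add] at rect
    have adj1 : (∫ t in (0:ℝ)..z.im, g ((x₀:ℂ) + t*Complex.I))
        + (∫ t in z.im..w.im, g ((x₀:ℂ) + t*Complex.I))
        = ∫ t in (0:ℝ)..w.im, g ((x₀:ℂ) + t*Complex.I) :=
      intervalIntegral.integral_add_adjacent_intervals
        (hint_v x₀ 0 z.im hax₀ h0b hz2) (hint_v x₀ z.im w.im hax₀ hz2 hw2)
    have adj2 : (∫ t in x₀..z.re, g ((t:ℂ) + z.im*Complex.I))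
        + (∫ t in z.re..w.re, g ((t:ℂ) + z.im*Complex.I))
        = ∫ t in x₀..w.re, g ((t:ℂ) + z.im*Complex.I) :=
      intervalIntegral.integral_add_adjacent_intervals
        (hint_h x₀ z.re z.im hax₀ hz1 hz2) (hint_h z.re w.re z.im hz1 hw1 hz2)
    simp only [hGdef, smul_eq_mul] at *
    rw [← Complex.re_add_im z]
    simp only [Complex.add_re, Complex.ofReal_re, Complex.mul_re, Complex.I_re, Complex.I_im,
      Complex.ofReal_im, mul_zero, mul_one, zero_sub, zero_mul, sub_zero, neg_zero, add_zero,
      Complex.add_im, Complex.mul_im, zero_add]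
    linear_combination (-1 : ℂ) * rect - Complex.I * adj1 - adj2
  refine ⟨G, fun z hz => ?_, hzero⟩
  rw [hasDerivAt_iff_isLittleO, Asymptotics.isLittleO_iff]
  intro c hc
  obtain ⟨δ₁, hδ₁, hδ₁'⟩ : ∃ δ > 0, ∀ u : ℂ, dist u z < δ → ‖g u - g z‖ ≤ c/2 := by
    obtain ⟨δ, hδ, h⟩ := Metric.continuousAt_iff.1 (hg z hz).continuousAt (c/2) (by positivity)
    exact ⟨δ, hδ, fun u hu => by rw [← dist_eq_norm]; exact (h hu).le⟩
  obtain ⟨δ₂, hδ₂, hδ₂'⟩ := Metric.isOpen_iff.1 (isOpen_Om a b) z hz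
  rw [Metric.eventually_nhds_iff]
  refine ⟨min (δ₁/2) (δ₂/2), by positivity, fun w hwz => ?_⟩
  have hwd : dist w z < min (δ₁/2) (δ₂/2) := hwz
  have hwOm : w ∈ Om a b := hδ₂' (lt_of_lt_of_le hwd (le_trans (min_le_right _ _) (by linarith)))
  have hre : |w.re - z.re| ≤ dist w z := by
    have := Complex.abs_re_le_norm (w - z)
    simpa [Complex.dist_eq, Complex.sub_re] using this
  have him : |w.im - z.im| ≤ dist w z := by
    have := Complex.abs_im_le_norm (w - z)
    simpa [Complex.dist_eq, Complex.sub_im] using this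
  have hkey := key z hz w hwOm
  have hsplit : G w - G z - (w - z) • g z
      = (∫ t in z.re..w.re, (g ((t:ℂ) + z.im*Complex.I) - g z))
        + Complex.I • (∫ t in z.im..w.im, (g ((w.re:ℂ) + t*Complex.I) - g z)) := by
    rw [intervalIntegral.integral_sub (hint_h z.re w.re z.im hz.1 hwOm.1 hz.2)
      intervalIntegrable_const,
      intervalIntegral.integral_sub (hint_v w.re z.im w.im hwOm.1 hz.2 hwOm.2)
      intervalIntegrable_const, hkey]
    simp only [intervalIntegral.integral_const, smul_eq_mul, smul_sub]
    have hwz' : w - z = ((w.re - z.re : ℝ) : ℂ) + ((w.im - z.im : ℝ):ℂ) * Complex.I := by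
      simp [Complex.ext_iff]
    rw [hwz']
    push_cast
    simp only [Complex.real_smul]
    push_cast
    ring
  rw [hsplit]
  have hb1 : ‖∫ t in z.re..w.re, (g ((t:ℂ) + z.im*Complex.I) - g z)‖ ≤ c/2 * |w.re - z.re| := by
    refine intervalIntegral.norm_integral_le_of_norm_le_const (fun t ht => ?_)
    refine hδ₁' _ ?_
    have h1 : ((t:ℂ) + z.im*Complex.I) - z = ((t - z.re : ℝ) : ℂ) := by
      rw [← Complex.re_add_im z]; simp [Complex.ext_iff]
    rw [Complex.dist_eq, h1, Complex.norm_real, Real.norm_eq_abs]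
    calc |t - z.re| ≤ |w.re - z.re| := abs_sub_left_of_mem_uIcc (Set.uIoc_subset_uIcc ht)
      _ ≤ dist w z := hre
      _ < δ₁ := lt_of_lt_of_le hwd (le_trans (min_le_left _ _) (by linarith))
  have hb2 : ‖∫ t in z.im..w.im, (g ((w.re:ℂ) + t*Complex.I) - g z)‖ ≤ c/2 * |w.im - z.im| := by
    refine intervalIntegral.norm_integral_le_of_norm_le_const (fun t ht => ?_)
    refine hδ₁' _ ?_
    have h1 : ((w.re:ℂ) + t*Complex.I) - z
        = ((w.re - z.re : ℝ) : ℂ) + ((t - z.im : ℝ):ℂ) * Complex.I := by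
      rw [← Complex.re_add_im z]; simp [Complex.ext_iff]
    rw [Complex.dist_eq, h1]
    calc ‖(((w.re - z.re : ℝ) : ℂ) + ((t - z.im : ℝ):ℂ) * Complex.I)‖
        ≤ ‖((w.re - z.re : ℝ) : ℂ)‖ + ‖(((t - z.im : ℝ):ℂ) * Complex.I)‖ :=
          norm_add_le _ _
      _ = |w.re - z.re| + |t - z.im| := by
          rw [norm_mul, Complex.norm_I, mul_one, Complex.norm_real, Complex.norm_real, Real.norm_eq_abs,
              Real.norm_eq_abs]
      _ ≤ dist w z + |w.im - z.im| := by
          have := abs_sub_left_of_mem_uIcc (Set.uIoc_subset_uIcc ht)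
          exact add_le_add hre this
      _ ≤ dist w z + dist w z := by linarith [him]
      _ < δ₁ := by
          have := lt_of_lt_of_le hwd (min_le_left _ _)
          linarith
  calc ‖(∫ t in z.re..w.re, (g ((t:ℂ) + z.im*Complex.I) - g z))
        + Complex.I • (∫ t in z.im..w.im, (g ((w.re:ℂ) + t*Complex.I) - g z))‖
      ≤ ‖∫ t in z.re..w.re, (g ((t:ℂ) + z.im*Complex.I) - g z)‖
        + ‖Complex.I • (∫ t in z.im..w.im, (g ((w.re:ℂ) + t*Complex.I) - g z))‖ := norm_add_le _ _
    _ ≤ c/2 * |w.re - z.re| + c/2 * |w.im - z.im| := by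
        rw [norm_smul, Complex.norm_I, one_mul]; exact add_le_add hb1 hb2
    _ ≤ c/2 * ‖w - z‖ + c/2 * ‖w - z‖ := by
        rw [← dist_eq_norm]
        have hc2 : (0:ℝ) ≤ c/2 := by positivity
        exact add_le_add (mul_le_mul_of_nonneg_left hre hc2) (mul_le_mul_of_nonneg_left him hc2)
    _ = c * ‖w - z‖ := by ring
end Primitive

section Bridge

lemma arg_exp_eq {w : ℂ} (h1 : -π < w.im) (h2 : w.im ≤ π) :
    Complex.arg (Complex.exp w) = w.im := by
  rw [Complex.exp_eq_exp_re_mul_sin_add_cos, ← Complex.ofReal_exp]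
  exact Complex.arg_mul_cos_add_sin_mul_I (Real.exp_pos _) ⟨h1, h2⟩

lemma neg_exp_mem_Usector {R : ℝ} (hR : 0 < R) {w : ℂ} (hw : w ∈ Om (Real.log R) (π/8)) :
    -Complex.exp w ∈ Usector R := by
  have hpi := Real.pi_pos
  constructor
  · rw [norm_neg, Complex.norm_exp]
    calc R = Real.exp (Real.log R) := (Real.exp_log hR).symm
      _ < Real.exp w.re := Real.exp_lt_exp.2 hw.1
  · rw [neg_neg, arg_exp_eq ?h1 ?h2]
    · exact hw.2
    case h1 => have := (abs_lt.1 hw.2).1; nlinarith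
    case h2 => have := (abs_lt.1 hw.2).2; nlinarith

lemma log_neg_mem_Om {R : ℝ} (hR : 0 < R) {ζ : ℂ} (hζ : ζ ∈ Usector R) :
    Complex.log (-ζ) ∈ Om (Real.log R) (π/8) := by
  have hζ0 : ζ ≠ 0 := by
    have h1 : (0:ℝ) < ‖ζ‖ := lt_trans hR hζ.1
    simpa using norm_pos_iff.1 h1
  constructor
  · rw [Complex.log_re]
    have : ‖-ζ‖ = ‖ζ‖ := by rw [norm_neg]
    rw [this]
    exact Real.log_lt_log hR hζ.1
  · rw [Complex.log_im]
    exact hζ.2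

end Bridge


/-- For `R` large, the ODE `σ'(y) − (1 + s(y))σ(y) = τ(y)` with `s, τ` holomorphic
on a neighborhood of the closure of `U_R`, `|s(y)| ≤ C/|y|`, `|τ(y)| ≤ C/|y|²`,
has a holomorphic solution `σ` on `U_R` with `|σ(y)| ≤ C'/|y|`. -/
theorem ode_solution_estimate (C : ℝ) (hC : 0 < C) :
    ∃ R₀ : ℝ, ∀ R : ℝ, R₀ ≤ R → ∀ s τ : ℂ → ℂ,
      (∃ V : Set ℂ, IsOpen V ∧ closure (Usector R) ⊆ V ∧
        DifferentiableOn ℂ s V ∧ DifferentiableOn ℂ τ V) →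
      (∀ y ∈ Usector R, ‖s y‖ ≤ C / ‖y‖) →
      (∀ y ∈ Usector R, ‖τ y‖ ≤ C / ‖y‖ ^ 2) →
      ∃ σ : ℂ → ℂ, ∃ C' > (0 : ℝ),
        (∀ y ∈ Usector R, HasDerivAt σ ((1 + s y) * σ y + τ y) y) ∧
        ∀ y ∈ Usector R, ‖σ y‖ ≤ C' / ‖y‖ := by
  refine ⟨2*C + 4, fun R hR s τ hV hs_bound hτ_bound => ?_⟩
  obtain ⟨V, hVopen, hVcl, hs_d, hτ_d⟩ := hV
  have hpi := Real.pi_pos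
  have hpile := Real.pi_le_four
  have hRpos : (0:ℝ) < R := by linarith
  have hR4 : (4:ℝ) ≤ R := by linarith
  set a : ℝ := Real.log R with ha
  set b : ℝ := π/8 with hbdef
  have hb : (0:ℝ) < b := by positivity
  have hb1 : b ≤ 1 := by rw [hbdef]; linarith
  have hexpa : Real.exp a = R := Real.exp_log hRpos
  have ha0 : 0 ≤ a := Real.log_nonneg (by linarith)
  set x₀ : ℝ := a + 1 with hx₀def
  have hax₀ : a < x₀ := by rw [hx₀def]; linarith
  have hUsub : ∀ w ∈ Om a b, -Complex.exp w ∈ Usector R := fun w hw =>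
    neg_exp_mem_Usector hRpos hw
  have hUV : ∀ w ∈ Om a b, -Complex.exp w ∈ V := fun w hw =>
    hVcl (subset_closure (hUsub w hw))
  have hnexp_norm : ∀ w : ℂ, ‖Complex.exp w‖ = Real.exp w.re := fun w => by
    rw [Complex.norm_exp]
  -- the coefficient in the pulled-back homogeneous part
  set fs : ℂ → ℂ := fun w => -(s (-Complex.exp w)) * Complex.exp w with hfsdef
  have hfs_diff : ∀ w ∈ Om a b, DifferentiableAt ℂ fs w := by
    intro w hw
    have h1 : DifferentiableAt ℂ s (-Complex.exp w) :=
      hs_d.differentiableAt (hVopen.mem_nhds (hUV w hw))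
    exact ((h1.comp w ((Complex.differentiable_exp w).neg)).neg).mul (Complex.differentiable_exp w)
  have hfs_bound : ∀ w ∈ Om a b, ‖fs w‖ ≤ C := by
    intro w hw
    have h1 := hs_bound _ (hUsub w hw)
    rw [norm_neg] at h1
    rw [hnexp_norm] at h1
    have h2 : ‖fs w‖ = ‖s (-Complex.exp w)‖ * Real.exp w.re := by
      rw [hfsdef]; rw [norm_mul, norm_neg, hnexp_norm]
    rw [h2]
    calc ‖s (-Complex.exp w)‖ * Real.exp w.re ≤ (C / Real.exp w.re) * Real.exp w.re :=
          mul_le_mul_of_nonneg_right h1 (Real.exp_pos _).le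
      _ = C := div_mul_cancel₀ C (Real.exp_ne_zero _)
  obtain ⟨S, hS, -⟩ := exists_primitive a b hb fs hfs_diff
  set F : ℂ → ℂ := fun w => -Complex.exp w + S w with hFdef
  have hF : ∀ w ∈ Om a b, HasDerivAt F (-Complex.exp w + fs w) w := fun w hw =>
    ((Complex.hasDerivAt_exp w).neg).add (hS w hw)
  set g₂ : ℂ → ℂ := fun w => Complex.exp (-F w) * τ (-Complex.exp w) * (-Complex.exp w) with hg₂def
  have hg₂_diff : ∀ w ∈ Om a b, DifferentiableAt ℂ g₂ w := by
    intro w hw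
    have h1 : DifferentiableAt ℂ τ (-Complex.exp w) :=
      hτ_d.differentiableAt (hVopen.mem_nhds (hUV w hw))
    have h2 : DifferentiableAt ℂ F w := (hF w hw).differentiableAt
    exact ((h2.neg.cexp).mul (h1.comp w ((Complex.differentiable_exp w).neg))).mul
      ((Complex.differentiable_exp w).neg)
  obtain ⟨G, hG, hG0⟩ := exists_primitive a b hb g₂ hg₂_diff
  set σ : ℂ → ℂ := fun u => Complex.exp (F (Complex.log (-u))) * G (Complex.log (-u)) with hσdef
  refine ⟨σ, Real.exp 1 * (C * Real.exp (Real.exp x₀ + C)) + C * Real.exp (Real.exp x₀ + 2*C) + 1,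
    by positivity, ?_, ?_⟩
  · -- the ODE
    intro ζ hζ
    have hζ0 : ζ ≠ 0 := by
      have h1 : (0:ℝ) < ‖ζ‖ := lt_trans hRpos hζ.1
      simpa using norm_pos_iff.1 h1
    have hnζ0 : -ζ ≠ 0 := neg_ne_zero.2 hζ0
    have hLmem : Complex.log (-ζ) ∈ Om a b := log_neg_mem_Om hRpos hζ
    have hexplog : Complex.exp (Complex.log (-ζ)) = -ζ := Complex.exp_log hnζ0
    have hslit : -ζ ∈ Complex.slitPlane := by
      rw [Complex.mem_slitPlane_iff]
      left
      have h1 : |Complex.arg (-ζ)| < π/2 := lt_trans hζ.2 (by linarith)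
      rcases Complex.abs_arg_lt_pi_div_two_iff.1 h1 with h | h
      · exact h
      · exact absurd h hnζ0
    have hL : HasDerivAt (fun u : ℂ => Complex.log (-u)) ζ⁻¹ ζ := by
      have h1 := (Complex.hasDerivAt_log hslit).comp ζ (hasDerivAt_neg ζ)
      have h2 : (-ζ)⁻¹ * (-1) = ζ⁻¹ := by
        rw [inv_neg]; ring
      rw [← h2]
      exact h1
    have hFL := hF _ hLmem
    have hGL := hG _ hLmem
    have inner := (hFL.cexp).mul hGL
    have hcomp := inner.comp ζ hL
    have hfsL : fs (Complex.log (-ζ)) = ζ * s ζ := by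
      rw [hfsdef]
      simp only [hexplog, neg_neg]
      ring
    have hg₂L : g₂ (Complex.log (-ζ)) = Complex.exp (-F (Complex.log (-ζ))) * τ ζ * ζ := by
      rw [hg₂def]
      simp only [hexplog, neg_neg]
    have hEE : Complex.exp (F (Complex.log (-ζ))) * Complex.exp (-F (Complex.log (-ζ))) = 1 := by
      rw [← Complex.exp_add]
      simp
    have key : ∀ (A B Gw : ℂ), A * B = 1 →
        (1 + s ζ) * (A * Gw) + τ ζ
          = (A * (-(-ζ) + ζ * s ζ) * Gw + A * (B * τ ζ * ζ)) * ζ⁻¹ := by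
      intro A B Gw hAB
      have h : A * (-(-ζ) + ζ * s ζ) * Gw + A * (B * τ ζ * ζ)
          = ((1 + s ζ) * (A * Gw) + τ ζ) * ζ := by
        linear_combination (τ ζ * ζ) * hAB
      rw [h, mul_inv_cancel_right₀ hζ0]
    refine hcomp.congr_deriv (Eq.symm ?_)
    rw [hfsL, hg₂L, hexplog]
    exact key _ _ _ hEE
  · -- the estimate
    intro ζ hζ
    have hζ0 : ζ ≠ 0 := by
      have h1 : (0:ℝ) < ‖ζ‖ := lt_trans hRpos hζ.1
      simpa using norm_pos_iff.1 h1
    have hnζ0 : -ζ ≠ 0 := neg_ne_zero.2 hζ0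
    have hLmem : Complex.log (-ζ) ∈ Om a b := log_neg_mem_Om hRpos hζ
    have hexplog : Complex.exp (Complex.log (-ζ)) = -ζ := Complex.exp_log hnζ0
    set w : ℂ := Complex.log (-ζ) with hwdef
    obtain ⟨hxa, hyb⟩ := hLmem
    have h0b : |(0:ℝ)| < b := by simpa using hb
    have hζnorm : ‖ζ‖ = Real.exp w.re := by
      rw [← norm_neg ζ, ← hexplog, hnexp_norm]
    have hfscont : ContinuousOn fs (Om a b) := fun u hu =>
      (hfs_diff u hu).continuousAt.continuousWithinAt
    have hg₂cont : ContinuousOn g₂ (Om a b) := fun u hu =>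
      (hg₂_diff u hu).continuousAt.continuousWithinAt
    have hSdh : ∀ x₁ x₂ y' : ℝ, a < x₁ → a < x₂ → |y'| < b →
        ‖S ((x₂:ℂ) + (y':ℂ)*Complex.I) - S ((x₁:ℂ) + (y':ℂ)*Complex.I)‖ ≤ C * |x₂ - x₁| := by
      intro x₁ x₂ y' h1 h2 h3
      exact norm_ftc_horiz_le (g := fs) (fun t ht => hS _ (horiz_mem_Om h1 h2 h3 ht))
        (hfscont.comp (Continuous.continuousOn
            (Complex.continuous_ofReal.add continuous_const))
          (fun t ht => horiz_mem_Om h1 h2 h3 ht))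
        (fun t ht => hfs_bound _ (horiz_mem_Om h1 h2 h3 ht))
    have hSdv : ∀ x' y₁ y₂ : ℝ, a < x' → |y₁| < b → |y₂| < b →
        ‖S ((x':ℂ) + (y₂:ℂ)*Complex.I) - S ((x':ℂ) + (y₁:ℂ)*Complex.I)‖ ≤ C * |y₂ - y₁| := by
      intro x' y₁ y₂ h1 h2 h3
      exact norm_ftc_vert_le (g := fs) (fun t ht => hS _ (vert_mem_Om h1 h2 h3 ht))
        (hfscont.comp (Continuous.continuousOn
            (continuous_const.add (Complex.continuous_ofReal.mul continuous_const)))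
          (fun t ht => vert_mem_Om h1 h2 h3 ht))
        (fun t ht => hfs_bound _ (vert_mem_Om h1 h2 h3 ht))
    have hGpath : G w = (∫ t in x₀..w.re, g₂ ((t:ℂ) + (w.im:ℂ) * Complex.I))
        + ∫ t in (0:ℝ)..w.im, g₂ ((x₀:ℂ) + (t:ℂ)*Complex.I) * Complex.I := by
      have h1 : G ((w.re:ℂ) + (w.im:ℂ)*Complex.I) - G ((x₀:ℂ) + (w.im:ℂ)*Complex.I)
          = ∫ t in x₀..w.re, g₂ ((t:ℂ) + (w.im:ℂ)*Complex.I) :=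
        ftc_horiz (fun t ht => hG _ (horiz_mem_Om hax₀ hxa hyb ht))
          (hg₂cont.comp (Continuous.continuousOn
              (Complex.continuous_ofReal.add continuous_const))
            (fun t ht => horiz_mem_Om hax₀ hxa hyb ht))
      have h2 : G ((x₀:ℂ) + (w.im:ℂ)*Complex.I) - G ((x₀:ℂ) + ((0:ℝ):ℂ)*Complex.I)
          = ∫ t in (0:ℝ)..w.im, g₂ ((x₀:ℂ) + (t:ℂ)*Complex.I) * Complex.I :=
        ftc_vert (fun t ht => hG _ (vert_mem_Om hax₀ h0b hyb ht))
          (hg₂cont.comp (Continuous.continuousOn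
              (continuous_const.add (Complex.continuous_ofReal.mul continuous_const)))
            (fun t ht => vert_mem_Om hax₀ h0b hyb ht))
      have h3 : ((x₀:ℂ) + ((0:ℝ):ℂ)*Complex.I) = ((x₀ : ℝ) : ℂ) := by
        push_cast; ring
      have h4 : G (((x₀:ℝ)):ℂ) = 0 := hG0
      rw [h3, h4, sub_zero] at h2
      have h5 : ((w.re:ℂ) + (w.im:ℂ)*Complex.I) = w := Complex.re_add_im w
      rw [h5] at h1
      linear_combination h1 + h2
    have hFre : ∀ w' : ℂ, (F w').re = -(Real.exp w'.re * Real.cos w'.im) + (S w').re := by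
      intro w'
      rw [hFdef]
      simp [Complex.add_re, Complex.neg_re, Complex.exp_re]
    have hg₂norm : ∀ w' ∈ Om a b, ‖g₂ w'‖ ≤ C * Real.exp (-(F w').re - w'.re) := by
      intro w' hw'
      have hτ := hτ_bound _ (hUsub w' hw')
      have hnn : ‖-Complex.exp w'‖ = Real.exp w'.re := by rw [norm_neg, hnexp_norm]
      have h1 : ‖g₂ w'‖ = Real.exp ((-F w').re) * ‖τ (-Complex.exp w')‖ * Real.exp w'.re := by
        rw [hg₂def]
        rw [norm_mul, norm_mul, hnexp_norm, hnn]
      rw [h1, Complex.neg_re]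
      rw [hnn] at hτ
      calc Real.exp (-(F w').re) * ‖τ (-Complex.exp w')‖ * Real.exp w'.re
          ≤ Real.exp (-(F w').re) * (C / (Real.exp w'.re)^2) * Real.exp w'.re := by
            apply mul_le_mul_of_nonneg_right _ (Real.exp_pos _).le
            exact mul_le_mul_of_nonneg_left hτ (Real.exp_pos _).le
        _ = C * Real.exp (-(F w').re - w'.re) := by
            rw [Real.exp_sub, Real.exp_neg]
            field_simp
    have hcos : ∀ y' : ℝ, |y'| < b → 1/2 ≤ Real.cos y' := by
      intro y' hy'
      have h1 : Real.cos (π/3) ≤ Real.cos |y'| := by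
        apply Real.cos_le_cos_of_nonneg_of_le_pi (abs_nonneg _) (by linarith)
        rw [hbdef] at hy'; linarith
      rw [Real.cos_pi_div_three] at h1
      rwa [Real.cos_abs] at h1
    set Kh : ℝ := C * Real.exp (Real.exp x₀ + C) with hKhdef
    set Kv : ℝ := C * Real.exp (Real.exp x₀ + 2*C) with hKvdef
    have hKh0 : 0 < Kh := by rw [hKhdef]; positivity
    have hKv0 : 0 < Kv := by rw [hKvdef]; positivity
    set P : ℝ := Real.exp ((F w).re) with hPdef
    have hPpos : 0 < P := Real.exp_pos _
    have hcosw := hcos w.im hyb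
    have hcosw1 : Real.cos w.im ≤ 1 := Real.cos_le_one _
    have hexpt_a : Real.exp a ≤ Real.exp w.re := Real.exp_le_exp.2 hxa.le
    -- pointwise bound on the horizontal segment
    have hHpt : ∀ t ∈ Set.uIcc x₀ w.re,
        ‖g₂ ((t:ℂ) + (w.im:ℂ)*Complex.I)‖ ≤ Kh / P * (Real.exp (-2*w.re) * Real.exp t) := by
      intro t ht
      have hta : a < t := by
        rw [Set.uIcc, Set.mem_Icc] at ht
        exact lt_of_lt_of_le (lt_min hax₀ hxa) ht.1
      have htx₀ : t ≤ max x₀ w.re := by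
        rw [Set.uIcc, Set.mem_Icc] at ht
        exact ht.2
      have hmem := horiz_mem_Om hax₀ hxa hyb ht
      have h1 := hg₂norm _ hmem
      have hptre : ((t:ℂ) + (w.im:ℂ)*Complex.I).re = t := by simp
      have hptim : ((t:ℂ) + (w.im:ℂ)*Complex.I).im = w.im := by simp
      rw [hptre] at h1
      have hSd := hSdh t w.re w.im hta hxa hyb
      rw [Complex.re_add_im w] at hSd
      have hRe : (S w).re - (S ((t:ℂ) + (w.im:ℂ)*Complex.I)).re ≤ C * |w.re - t| := by
        have h2 : (S w - S ((t:ℂ) + (w.im:ℂ)*Complex.I)).re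
            ≤ ‖S w - S ((t:ℂ) + (w.im:ℂ)*Complex.I)‖ := by
          exact Complex.re_le_norm _
        rw [Complex.sub_re] at h2
        exact le_trans h2 hSd
      have hRe2 : (S w).re - (S ((t:ℂ) + (w.im:ℂ)*Complex.I)).re ≤ C * |w.re - t| := hRe
      have hkey : (F w).re - (F ((t:ℂ) + (w.im:ℂ)*Complex.I)).re - t
          ≤ (Real.exp x₀ + C) + (t - 2*w.re) := by
        rw [hFre, hFre, hptre, hptim, hx₀def]
        refine keyH_aux C R a w.re t (Real.cos w.im) _ _ hC hR hexpa hta ?_ hxa hcosw hcosw1 hRe2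
        rw [hx₀def] at htx₀
        exact htx₀
      calc ‖g₂ ((t:ℂ) + (w.im:ℂ)*Complex.I)‖
          ≤ C * Real.exp (-(F ((t:ℂ) + (w.im:ℂ)*Complex.I)).re - t) := h1
        _ ≤ Kh / P * (Real.exp (-2*w.re) * Real.exp t) := by
            rw [div_mul_eq_mul_div, le_div_iff₀ hPpos]
            have h2 : Real.exp ((F w).re) * Real.exp (-(F ((t:ℂ) + (w.im:ℂ)*Complex.I)).re - t)
                ≤ Real.exp (Real.exp x₀ + C) * (Real.exp (-2*w.re) * Real.exp t) := by
              rw [← Real.exp_add, ← Real.exp_add, ← Real.exp_add]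
              apply Real.exp_le_exp.2
              linarith [hkey]
            calc C * Real.exp (-(F ((t:ℂ) + (w.im:ℂ)*Complex.I)).re - t) * P
                = C * (Real.exp ((F w).re)
                    * Real.exp (-(F ((t:ℂ) + (w.im:ℂ)*Complex.I)).re - t)) := by
                  rw [hPdef]; ring
              _ ≤ C * (Real.exp (Real.exp x₀ + C) * (Real.exp (-2*w.re) * Real.exp t)) :=
                  mul_le_mul_of_nonneg_left h2 hC.le
              _ = Kh * (Real.exp (-2*w.re) * Real.exp t) := by rw [hKhdef]; ring
    -- pointwise bound on the vertical segment
    have hVpt : ∀ t ∈ Set.uIcc (0:ℝ) w.im,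
        ‖g₂ ((x₀:ℂ) + (t:ℂ)*Complex.I) * Complex.I‖ ≤ Kv / P * Real.exp (-w.re) := by
      intro t ht
      have htb : |t| < b := abs_lt_of_uIcc h0b hyb ht
      have hmem := vert_mem_Om hax₀ h0b hyb ht
      have h1 := hg₂norm _ hmem
      have hptre : ((x₀:ℂ) + (t:ℂ)*Complex.I).re = x₀ := by simp
      have hptim : ((x₀:ℂ) + (t:ℂ)*Complex.I).im = t := by simp
      rw [hptre] at h1
      have hSd1 := hSdh x₀ w.re w.im hax₀ hxa hyb
      rw [Complex.re_add_im w] at hSd1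
      have hSd2 := hSdv x₀ t w.im hax₀ htb hyb
      have hRe : (S w).re - (S ((x₀:ℂ) + (t:ℂ)*Complex.I)).re
          ≤ C * |w.re - x₀| + C * |w.im - t| := by
        have h2 : (S w - S ((x₀:ℂ) + (t:ℂ)*Complex.I)).re
            ≤ ‖S w - S ((x₀:ℂ) + (t:ℂ)*Complex.I)‖ := by
          exact Complex.re_le_norm _
        rw [Complex.sub_re] at h2
        refine le_trans h2 (le_trans (norm_sub_le_norm_sub_add_norm_sub _
          (S ((x₀:ℂ) + (w.im:ℂ)*Complex.I)) _) ?_)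
        exact add_le_add hSd1 hSd2
      have habs1 : |w.re - x₀| ≤ (w.re - a) + 1 := by
        rcases abs_cases (w.re - x₀) with ⟨h3, _⟩ | ⟨h3, _⟩ <;> rw [h3] <;>
          rw [hx₀def] at * <;> [linarith; linarith]
      have habs2 : |w.im - t| ≤ 1 := by
        have h3 : |w.im - t| ≤ |w.im| + |t| := abs_sub _ _
        rw [hbdef] at hyb htb
        calc |w.im - t| ≤ |w.im| + |t| := h3
          _ ≤ π/8 + π/8 := by linarith
          _ ≤ 1 := by linarith
      have hkey : (F w).re - (F ((x₀:ℂ) + (t:ℂ)*Complex.I)).re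
          ≤ Real.exp x₀ + 2*C + x₀ - w.re := by
        rw [hFre, hFre, hptre, hptim, hx₀def]
        refine keyV_aux C R a w.re (Real.cos w.im) (Real.cos t) _ _ hC hR hexpa hxa hcosw
          (Real.cos_le_one t) ?_
        calc (S w).re - (S ((x₀:ℂ) + (t:ℂ)*Complex.I)).re
            ≤ C * |w.re - x₀| + C * |w.im - t| := hRe
          _ ≤ C * ((w.re - a) + 1) + C * 1 := by
              rw [hx₀def] at habs1
              exact add_le_add (mul_le_mul_of_nonneg_left habs1 hC.le)
                (mul_le_mul_of_nonneg_left habs2 hC.le)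
      have hnormI : ‖g₂ ((x₀:ℂ) + (t:ℂ)*Complex.I) * Complex.I‖
          = ‖g₂ ((x₀:ℂ) + (t:ℂ)*Complex.I)‖ := by
        rw [norm_mul, Complex.norm_I, mul_one]
      rw [hnormI]
      calc ‖g₂ ((x₀:ℂ) + (t:ℂ)*Complex.I)‖
          ≤ C * Real.exp (-(F ((x₀:ℂ) + (t:ℂ)*Complex.I)).re - x₀) := h1
        _ ≤ Kv / P * Real.exp (-w.re) := by
            rw [div_mul_eq_mul_div, le_div_iff₀ hPpos]
            have h2 : Real.exp ((F w).re) * Real.exp (-(F ((x₀:ℂ) + (t:ℂ)*Complex.I)).re - x₀)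
                ≤ Real.exp (Real.exp x₀ + 2*C) * Real.exp (-w.re) := by
              rw [← Real.exp_add, ← Real.exp_add]
              apply Real.exp_le_exp.2
              linarith [hkey]
            calc C * Real.exp (-(F ((x₀:ℂ) + (t:ℂ)*Complex.I)).re - x₀) * P
                = C * (Real.exp ((F w).re)
                    * Real.exp (-(F ((x₀:ℂ) + (t:ℂ)*Complex.I)).re - x₀)) := by
                  rw [hPdef]; ring
              _ ≤ C * (Real.exp (Real.exp x₀ + 2*C) * Real.exp (-w.re)) :=
                  mul_le_mul_of_nonneg_left h2 hC.le
              _ = Kv * Real.exp (-w.re) := by rw [hKvdef]; ring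
    -- integral bounds
    have hintH : ‖∫ t in x₀..w.re, g₂ ((t:ℂ) + (w.im:ℂ)*Complex.I)‖
        ≤ Kh / P * Real.exp (-2*w.re) * |Real.exp w.re - Real.exp x₀| := by
      have hbd : IntervalIntegrable (fun t : ℝ => Kh / P * (Real.exp (-2*w.re) * Real.exp t))
          MeasureTheory.volume x₀ w.re :=
        Continuous.intervalIntegrable
          (continuous_const.mul (continuous_const.mul Real.continuous_exp)) _ _
      have h1 := intervalIntegral.norm_integral_le_abs_of_norm_le
        (f := fun t : ℝ => g₂ ((t:ℂ) + (w.im:ℂ)*Complex.I))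
        (g := fun t : ℝ => Kh / P * (Real.exp (-2*w.re) * Real.exp t))
        (μ := MeasureTheory.volume) (a := x₀) (b := w.re)
        ((MeasureTheory.ae_restrict_iff' measurableSet_uIoc).2
          (MeasureTheory.ae_of_all _ (fun t ht => hHpt t (Set.uIoc_subset_uIcc ht)))) hbd
      refine le_trans h1 ?_
      have h2 : (∫ t in x₀..w.re, Kh / P * (Real.exp (-2*w.re) * Real.exp t))
          = Kh / P * Real.exp (-2*w.re) * (Real.exp w.re - Real.exp x₀) := by
        rw [intervalIntegral.integral_const_mul]
        rw [intervalIntegral.integral_const_mul]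
        rw [integral_exp]
        ring
      rw [h2, abs_mul]
      have h3 : |Kh / P * Real.exp (-2*w.re)| = Kh / P * Real.exp (-2*w.re) :=
        abs_of_nonneg (mul_nonneg (div_nonneg hKh0.le hPpos.le) (Real.exp_pos _).le)
      rw [h3]
    have habs : |Real.exp w.re - Real.exp x₀| ≤ Real.exp 1 * Real.exp w.re := by
      rw [hx₀def]
      exact habs_aux a w.re hxa.le
    have hintV : ‖∫ t in (0:ℝ)..w.im, g₂ ((x₀:ℂ) + (t:ℂ)*Complex.I) * Complex.I‖
        ≤ Kv / P * Real.exp (-w.re) * |w.im - 0| :=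
      intervalIntegral.norm_integral_le_of_norm_le_const
        (fun t ht => hVpt t (Set.uIoc_subset_uIcc ht))
    have hintV2 : ‖∫ t in (0:ℝ)..w.im, g₂ ((x₀:ℂ) + (t:ℂ)*Complex.I) * Complex.I‖
        ≤ Kv / P * Real.exp (-w.re) := by
      refine le_trans hintV ?_
      have h1 : |w.im - 0| ≤ 1 := by
        rw [sub_zero]; exact le_trans hyb.le hb1
      exact mul_le_of_le_one_right
        (mul_nonneg (div_nonneg hKv0.le hPpos.le) (Real.exp_pos _).le) h1
    have hσnorm : ‖σ ζ‖ = P * ‖G w‖ := by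
      rw [hσdef]
      simp only []
      rw [norm_mul, hnexp_norm, hPdef]
    have hGle : ‖G w‖ ≤ ‖∫ t in x₀..w.re, g₂ ((t:ℂ) + (w.im:ℂ)*Complex.I)‖
        + ‖∫ t in (0:ℝ)..w.im, g₂ ((x₀:ℂ) + (t:ℂ)*Complex.I) * Complex.I‖ := by
      rw [hGpath]; exact norm_add_le _ _
    have hfinal : ‖σ ζ‖ ≤ (Real.exp 1 * Kh + Kv) * Real.exp (-w.re) := by
      calc ‖σ ζ‖ = P * ‖G w‖ := hσnorm
        _ ≤ P * ((Kh / P * Real.exp (-2*w.re) * (Real.exp 1 * Real.exp w.re))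
            + Kv / P * Real.exp (-w.re)) := by
            apply mul_le_mul_of_nonneg_left _ hPpos.le
            refine le_trans hGle (add_le_add (le_trans hintH ?_) hintV2)
            apply mul_le_mul_of_nonneg_left habs
            positivity
        _ = Real.exp 1 * Kh * (Real.exp (-2*w.re) * Real.exp w.re)
            + Kv * Real.exp (-w.re) := by
            field_simp
        _ = (Real.exp 1 * Kh + Kv) * Real.exp (-w.re) := by
            rw [← Real.exp_add]
            ring_nf
    calc ‖σ ζ‖ ≤ (Real.exp 1 * Kh + Kv) * Real.exp (-w.re) := hfinal
      _ ≤ (Real.exp 1 * Kh + Kv + 1) * Real.exp (-w.re) := by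
          apply mul_le_mul_of_nonneg_right _ (Real.exp_pos _).le
          linarith
      _ = (Real.exp 1 * Kh + Kv + 1) / ‖ζ‖ := by
          rw [hζnorm, Real.exp_neg, div_eq_mul_inv]
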